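/- arXiv:math/0309025 — 2 statements merged into one kernel-verified Lean document; each statement's English description precedes it below -/
import Mathlib

section
/- The group Γ of plane isometries generated by reflections in the three sides of an equilateral triangle with side length 1 has the property that every nonidentity translation in Γ has translation vector of Euclidean length at least √3. -/
open Complex

/-- Reflection of the plane in the line through `a` with direction `d ≠ 0`. -/
noncomputable def reflectLine (a d : ℂ) : Function.End ℂ :=
  fun z => a + (d / (starRingEnd ℂ) d) * (starRingEnd ℂ) (z - a)

/-- The three reflections in the sides of the equilateral triangle with
vertices `0`, `1`, `e^{iπ/3}` (side length `1`). -/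
noncomputable def triangleReflections : Set (Function.End ℂ) :=
  { reflectLine 0 1,
    reflectLine 0 (Complex.exp (Real.pi * Complex.I / 3)),
    reflectLine 1 (Complex.exp (Real.pi * Complex.I / 3) - 1) }

noncomputable def W : ℂ := Complex.exp (Real.pi * Complex.I / 3)

lemma W_eq : W = 1/2 + (Real.sqrt 3 : ℝ) * Complex.I / 2 := by
  rw [W, show ((Real.pi : ℂ) * Complex.I / 3) = ((Real.pi/3 : ℝ) : ℂ) * Complex.I by
    push_cast; ring,
    Complex.exp_mul_I, ← Complex.ofReal_cos, ← Complex.ofReal_sin,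
    Real.cos_pi_div_three, Real.sin_pi_div_three]
  push_cast
  ring

lemma W_sq : W^2 = W - 1 := by
  have hs : ((Real.sqrt 3 : ℝ) : ℂ)^2 = 3 := by
    norm_cast
    rw [Real.sq_sqrt] ; norm_num
  rw [W_eq]
  linear_combination Complex.I^2/4 * hs + (3/4) * Complex.I_sq

lemma W_cube : W^3 = -1 := by linear_combination (W + 1) * W_sq

lemma W_conj : (starRingEnd ℂ) W = 1 - W := by
  rw [W_eq]
  simp only [map_add, map_mul, map_div₀, map_one, map_ofNat, Complex.conj_I,
    Complex.conj_ofReal]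
  ring

lemma W_ne_one : W ≠ 1 := by
  intro h
  have h2 := W_sq
  rw [h] at h2
  norm_num at h2

lemma W_ne_zero : W ≠ 0 := Complex.exp_ne_zero _

/-- Unit part: cube roots of unity (as powers of W). -/
def Upart (u : ℂ) : Prop := u = 1 ∨ u = W^2 ∨ u = W^4

/-- The index-3 sublattice of ℤ[W] giving the translation lattice. -/
def Lpart (t : ℂ) : Prop := ∃ a b : ℤ, t = (a : ℂ) + (b : ℂ) * W ∧ (3:ℤ) ∣ (a - b)

lemma Upart_mul {u u' : ℂ} (h : Upart u) (h' : Upart u') : Upart (u * u') := by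
  rcases h with rfl | rfl | rfl <;> rcases h' with rfl | rfl | rfl
  · exact Or.inl (by ring)
  · exact Or.inr (Or.inl (by ring))
  · exact Or.inr (Or.inr (by ring))
  · exact Or.inr (Or.inl (by ring))
  · exact Or.inr (Or.inr (by ring))
  · exact Or.inl (by linear_combination (W^3 - 1) * W_cube)
  · exact Or.inr (Or.inr (by ring))
  · exact Or.inl (by linear_combination (W^3 - 1) * W_cube)
  · exact Or.inr (Or.inl (by linear_combination (W^5 - W^2) * W_cube))

lemma Upart_conj {u : ℂ} (h : Upart u) : Upart ((starRingEnd ℂ) u) := by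
  rcases h with rfl | rfl | rfl
  · exact Or.inl (by simp)
  · refine Or.inr (Or.inr ?_)
    rw [map_pow, W_conj]
    linear_combination (-W^2 - W + 1) * W_sq
  · refine Or.inr (Or.inl ?_)
    rw [map_pow, W_conj]
    linear_combination (W^2 - 3*W + 1) * W_sq

lemma Lpart_add {t t' : ℂ} (h : Lpart t) (h' : Lpart t') : Lpart (t + t') := by
  obtain ⟨a, b, rfl, hd⟩ := h
  obtain ⟨a', b', rfl, hd'⟩ := h'
  exact ⟨a + a', b + b', by push_cast; ring, by omega⟩

lemma Lpart_conj {t : ℂ} (h : Lpart t) : Lpart ((starRingEnd ℂ) t) := by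
  obtain ⟨a, b, rfl, hd⟩ := h
  refine ⟨a + b, -b, ?_, by omega⟩
  simp only [map_add, map_mul, map_intCast, W_conj]
  push_cast
  ring

lemma Lpart_mul {u t : ℂ} (hu : Upart u) (h : Lpart t) : Lpart (u * t) := by
  obtain ⟨a, b, rfl, hd⟩ := h
  rcases hu with rfl | rfl | rfl
  · exact ⟨a, b, by ring, hd⟩
  · refine ⟨-(a+b), a, ?_, by omega⟩
    push_cast
    linear_combination (a:ℂ) * W_sq + (b:ℂ) * W_cube
  · refine ⟨b, -(a+b), ?_, by omega⟩
    push_cast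
    linear_combination (-(b:ℂ)) * W_sq + ((b:ℂ)*W^2 + (a:ℂ)*W) * W_cube

/-- Normal form predicate for elements of the reflection group. -/
def NF (f : Function.End ℂ) : Prop :=
  ∃ u t : ℂ, Upart u ∧ Lpart t ∧
    ((f = fun z => u * z + t) ∨ (f = fun z => u * (starRingEnd ℂ) z + t))

lemma Lpart_zero : Lpart 0 := ⟨0, 0, by simp, by omega⟩

lemma NF_mul {f g : Function.End ℂ} (hf : NF f) (hg : NF g) : NF (f * g) := by
  obtain ⟨u, t, hu, ht, hf⟩ := hf
  obtain ⟨u', t', hu', ht', hg⟩ := hg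
  have hmul : ∀ z, (f * g) z = f (g z) := fun _ => rfl
  rcases hf with rfl | rfl <;> rcases hg with rfl | rfl
  · exact ⟨u * u', u * t' + t, Upart_mul hu hu',
      Lpart_add (Lpart_mul hu ht') ht,
      Or.inl (by funext z; simp only [hmul]; ring)⟩
  · exact ⟨u * u', u * t' + t, Upart_mul hu hu',
      Lpart_add (Lpart_mul hu ht') ht,
      Or.inr (by funext z; simp only [hmul]; ring)⟩
  · exact ⟨u * (starRingEnd ℂ) u', u * (starRingEnd ℂ) t' + t,
      Upart_mul hu (Upart_conj hu'),
      Lpart_add (Lpart_mul hu (Lpart_conj ht')) ht,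
      Or.inr (by funext z; simp only [hmul, map_add, map_mul]; ring)⟩
  · exact ⟨u * (starRingEnd ℂ) u', u * (starRingEnd ℂ) t' + t,
      Upart_mul hu (Upart_conj hu'),
      Lpart_add (Lpart_mul hu (Lpart_conj ht')) ht,
      Or.inl (by funext z; simp only [hmul, map_add, map_mul, Complex.conj_conj]; ring)⟩

lemma NF_one : NF 1 :=
  ⟨1, 0, Or.inl rfl, Lpart_zero, Or.inl (funext fun z => by show z = 1 * z + 0; ring)⟩

lemma NF_gen : ∀ f ∈ triangleReflections, NF f := by
  intro f hf
  have h1W : (1 : ℂ) - W ≠ 0 := fun h => W_ne_one (by linear_combination -h)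
  rcases hf with rfl | rfl | rfl
  · refine ⟨1, 0, Or.inl rfl, Lpart_zero, Or.inr ?_⟩
    funext z
    show (0 : ℂ) + (1 / (starRingEnd ℂ) 1) * (starRingEnd ℂ) (z - 0)
        = 1 * (starRingEnd ℂ) z + 0
    simp
  · refine ⟨W^2, 0, Or.inr (Or.inl rfl), Lpart_zero, Or.inr ?_⟩
    funext z
    show (0 : ℂ) + (W / (starRingEnd ℂ) W) * (starRingEnd ℂ) (z - 0)
        = W^2 * (starRingEnd ℂ) z + 0
    have hdiv : W / (1 - W) = W^2 := by
      rw [div_eq_iff h1W]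
      linear_combination W_cube - W_sq
    rw [W_conj, hdiv]
    simp
  · refine ⟨W^4, 1 + W, Or.inr (Or.inr rfl),
      ⟨1, 1, by push_cast; ring, by omega⟩, Or.inr ?_⟩
    funext z
    show (1 : ℂ) + ((W - 1) / (starRingEnd ℂ) (W - 1)) * (starRingEnd ℂ) (z - 1)
        = W^4 * (starRingEnd ℂ) z + (1 + W)
    have hc : (starRingEnd ℂ) (W - 1) = -W := by
      rw [map_sub, W_conj, map_one]; ring
    have hdiv : (W - 1) / (-W) = W^4 := by
      rw [div_eq_iff (neg_ne_zero.2 W_ne_zero)]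
      linear_combination W^2 * W_cube - W_sq
    have hW4 : W^4 = -W := by linear_combination W * W_cube
    rw [hc, hdiv, map_sub, map_one]
    linear_combination -hW4

lemma int_bound (a b : ℤ) (h : ¬(a = 0 ∧ b = 0)) (hd : (3:ℤ) ∣ (a - b)) :
    3 ≤ a^2 + a*b + b^2 := by
  obtain ⟨k, hk⟩ := hd
  have ha : a = b + 3*k := by omega
  subst ha
  have hE : 1 ≤ b^2 + 3*b*k + 3*k^2 := by
    have hnz : ¬(b = 0 ∧ k = 0) := by
      intro ⟨hb, hk0⟩; exact h ⟨by omega, hb⟩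
    have h4 : 0 < 4*(b^2 + 3*b*k + 3*k^2) := by
      rcases eq_or_ne k 0 with rfl | hk0
      · have hb : b ≠ 0 := fun hb => hnz ⟨hb, rfl⟩
        have : 1 ≤ b^2 := by
          rcases hb.lt_or_gt with h' | h' <;> nlinarith
        nlinarith
      · have : 1 ≤ k^2 := by
          rcases hk0.lt_or_gt with h' | h' <;> nlinarith
        nlinarith [sq_nonneg (2*b + 3*k)]
    linarith
  nlinarith

lemma Lpart_big {t : ℂ} (h : Lpart t) (hne : t ≠ 0) : Real.sqrt 3 ≤ ‖t‖ := by
  obtain ⟨a, b, rfl, hd⟩ := h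
  have h3 : Real.sqrt 3 ^ 2 = 3 := Real.sq_sqrt (by norm_num)
  have hre : ((a:ℂ) + (b:ℂ) * W).re = (a:ℝ) + (b:ℝ) / 2 := by
    rw [W_eq]; simp; ring
  have him : ((a:ℂ) + (b:ℂ) * W).im = (b:ℝ) * Real.sqrt 3 / 2 := by
    rw [W_eq]; simp; ring
  have hnz : ¬(a = 0 ∧ b = 0) := by
    rintro ⟨rfl, rfl⟩; simp at hne
  have hsq : ‖(a:ℂ) + (b:ℂ) * W‖^2 = ((a:ℝ)^2 + a*b + b^2) := by
    rw [Complex.sq_norm, Complex.normSq_apply, hre, him]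
    linear_combination ((b:ℝ)^2/4) * h3
  have hb := int_bound a b hnz hd
  have hb' : (3:ℝ) ≤ (a:ℝ)^2 + a*b + b^2 := by exact_mod_cast hb
  have hfin : Real.sqrt 3 ≤ Real.sqrt (‖(a:ℂ) + (b:ℂ) * W‖^2) :=
    Real.sqrt_le_sqrt (by rw [hsq]; linarith)
  rwa [Real.sqrt_sq (norm_nonneg _)] at hfin

/-- In the group generated by the reflections in the sides of a unit
equilateral triangle, every nonidentity translation has translation vector of
length at least `√3`. -/
theorem shortest_translation_ge_sqrt_three :
    ∀ g ∈ Submonoid.closure triangleReflections,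
      ∀ v : ℂ, v ≠ 0 → g = (fun z => z + v) → Real.sqrt 3 ≤ ‖v‖ := by
  intro g hg v hv hgv
  have hNF : NF g :=
    Submonoid.closure_induction (motive := fun x _ => NF x) NF_gen NF_one
      (fun x y _ _ hx hy => NF_mul hx hy) hg
  obtain ⟨u, t, hu, ht, hcase⟩ := hNF
  have h0 : g 0 = v := by rw [hgv]; simp
  have htv : t = v := by
    rcases hcase with rfl | rfl <;> simpa using h0
  exact Lpart_big (htv ▸ ht) hv
end

section
/- Let γ be a shortest closed non-contractible rectifiable curve in a compact surface with boundary homeomorphic to a closed annulus, equipped with an intrinsic metric. Then γ is a simple closed curve (homeomorphic to a circle). -/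
open Set
open scoped ENNReal
noncomputable section
namespace SNCC
variable {X : Type*} [MetricSpace X]

def cl (t : ℝ) : ℝ := min 1 (max 0 t)
lemma cl_mem (t : ℝ) : cl t ∈ Icc (0:ℝ) 1 := ⟨le_min zero_le_one (le_max_left 0 t), min_le_left _ _⟩
lemma continuous_cl : Continuous cl := continuous_const.min (continuous_const.max continuous_id)
lemma cl_of_mem {t : ℝ} (h : t ∈ Icc (0:ℝ) 1) : cl t = t := by
  simp only [cl, max_eq_right h.1, min_eq_right h.2]
@[simp] lemma cl_zero : cl 0 = 0 := cl_of_mem ⟨le_rfl, zero_le_one⟩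
@[simp] lemma cl_one : cl 1 = 1 := cl_of_mem ⟨zero_le_one, le_rfl⟩

def FH (f g : ℝ → X) : Prop :=
  ∃ K : ℝ × ℝ → X, Continuous K ∧ (∀ t, K (0, t) = f (cl t)) ∧
    (∀ t, K (1, t) = g (cl t)) ∧ ∀ s, K (s, 0) = K (s, 1)

/-- From a clamped free nullhomotopy, build a full `NCLoop`-style contraction. -/
lemma FH.to_contr {σ : ℝ → X} (hσ : Continuous σ) (h01 : σ 0 = σ 1) {c : X}
    (h : FH σ (fun _ => c)) :
    ∃ H : ℝ × ℝ → X, Continuous H ∧ (∀ t, H (0, t) = σ t) ∧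
      (∀ t, H (1, t) = H (1, 0)) ∧ (∀ s, H (s, 0) = H (s, 1)) := by
  obtain ⟨K, Kc, K0, K1, Kl⟩ := h
  simp only at K1
  set A : ℝ × ℝ → X := fun p =>
    if cl p.1 ≤ 1/2 then σ ((1 - 2 * cl p.1) * p.2) else K (2 * cl p.1 - 1, 0) with hA
  set B : ℝ × ℝ → X := fun p => K (max 0 (2 * cl p.1 - 1), p.2) with hB
  set C : ℝ × ℝ → X := fun p =>
    if cl p.1 ≤ 1/2 then σ (1 + (1 - 2 * cl p.1) * (p.2 - 1)) else K (2 * cl p.1 - 1, 1) with hC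
  have hclc : Continuous fun p : ℝ × ℝ => cl p.1 := continuous_cl.comp continuous_fst
  have hAc : Continuous A := by
    apply Continuous.if_le
    · exact hσ.comp (((continuous_const.sub (continuous_const.mul hclc)).mul continuous_snd))
    · exact Kc.comp (((continuous_const.mul hclc).sub continuous_const).prodMk continuous_const)
    · exact hclc
    · exact continuous_const
    · rintro ⟨s, t⟩ hs
      simp only at hs ⊢
      rw [hs]
      have : (2 : ℝ) * (1/2) - 1 = 0 := by norm_num
      rw [this, K0, cl_zero]
      norm_num
  have hBc : Continuous B :=
    Kc.comp ((continuous_const.max ((continuous_const.mul hclc).sub continuous_const)).prodMk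
      continuous_snd)
  have hCc : Continuous C := by
    apply Continuous.if_le
    · exact hσ.comp (continuous_const.add ((continuous_const.sub
        (continuous_const.mul hclc)).mul (continuous_snd.sub continuous_const)))
    · exact Kc.comp (((continuous_const.mul hclc).sub continuous_const).prodMk continuous_const)
    · exact hclc
    · exact continuous_const
    · rintro ⟨s, t⟩ hs
      simp only at hs ⊢
      rw [hs]
      have : (2 : ℝ) * (1/2) - 1 = 0 := by norm_num
      rw [this, K0, cl_one]
      norm_num
  refine ⟨fun p => if p.2 ≤ 0 then A p else if p.2 ≤ 1 then B p else C p, ?_, ?_, ?_, ?_⟩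
  · apply Continuous.if_le
    · exact hAc
    · apply Continuous.if_le hBc hCc continuous_snd continuous_const
      rintro ⟨s, t⟩ ht
      simp only at ht ⊢
      rw [ht, hB, hC]
      simp only
      rcases le_or_gt (cl s) (1/2) with hs | hs
      · rw [if_pos hs, max_eq_left (by linarith), K0, cl_one]
        norm_num
      · rw [if_neg (not_le.2 hs), max_eq_right (by linarith)]
    · exact continuous_snd
    · exact continuous_const
    · rintro ⟨s, t⟩ ht
      simp only at ht ⊢
      rw [ht, if_pos zero_le_one, hA, hB]
      simp only
      rcases le_or_gt (cl s) (1/2) with hs | hs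
      · rw [if_pos hs, max_eq_left (by linarith), K0, cl_zero, mul_zero]
      · rw [if_neg (not_le.2 hs), max_eq_right (by linarith)]
  · intro t
    simp only
    have h0 : cl (0:ℝ) = 0 := cl_zero
    split_ifs with h1 h2
    · rw [hA]; simp only [h0]
      rw [if_pos (by norm_num)]
      norm_num
    · rw [hB]; simp only [h0]
      have : max 0 (2 * (0:ℝ) - 1) = 0 := by norm_num
      rw [this, K0, cl_of_mem ⟨le_of_not_ge h1, h2⟩]
    · rw [hC]; simp only [h0]
      rw [if_pos (by norm_num)]
      norm_num
  · intro t
    have hc1 : cl (1:ℝ) = 1 := cl_one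
    have hhalf : ¬ ((1:ℝ) ≤ 1/2) := by norm_num
    have e1 : (2:ℝ) * 1 - 1 = 1 := by norm_num
    have KK : K (1, 0) = K (1, 1) := Kl 1
    simp only
    rw [if_pos le_rfl]
    have hA10 : A (1, 0) = c := by
      rw [hA]; simp only [hc1]; rw [if_neg hhalf, e1, K1]
    rw [hA10]
    split_ifs with h1 h2
    · rw [hA]; simp only [hc1]; rw [if_neg hhalf, e1]; exact K1 0
    · rw [hB]; simp only [hc1]
      have : max (0:ℝ) (2 * 1 - 1) = 1 := by norm_num
      rw [this, K1]
    · rw [hC]; simp only [hc1]; rw [if_neg hhalf, e1, K1]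
  · intro s
    simp only
    rw [if_pos le_rfl, if_neg (by norm_num : ¬ (1:ℝ) ≤ 0), if_pos le_rfl, hA, hB]
    simp only
    rcases le_or_gt (cl s) (1/2) with hs | hs
    · rw [if_pos hs, max_eq_left (by linarith), K0, cl_one, mul_zero, h01]
    · rw [if_neg (not_le.2 hs), max_eq_right (by linarith), Kl]

lemma cl_of_nonpos {t : ℝ} (h : t ≤ 0) : cl t = 0 := by
  simp only [cl, max_eq_left h, min_eq_right zero_le_one]

lemma cl_of_ge_one {t : ℝ} (h : 1 ≤ t) : cl t = 1 :=
  min_eq_left (le_max_of_le_right h)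

lemma cl_idem (t : ℝ) : cl (cl t) = cl t := cl_of_mem (cl_mem t)

@[simp] lemma cl_idem' (t : ℝ) : cl (cl t) = cl t := cl_of_mem (cl_mem t)

lemma cl_nonneg (t : ℝ) : 0 ≤ cl t := (cl_mem t).1
lemma cl_le_one (t : ℝ) : cl t ≤ 1 := (cl_mem t).2

/-- From a free (clamped) nullhomotopy, build a *based* nullhomotopy: the basepoint
stays fixed at `σ 0` and the final loop is constantly `σ 0`. -/
lemma FH.based_null {σ : ℝ → X} (hσ : Continuous σ) (h01 : σ 0 = σ 1) {c : X}
    (h : FH σ (fun _ => c)) :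
    ∃ M : ℝ × ℝ → X, Continuous M ∧ (∀ u, M (0, u) = σ (cl u)) ∧
      (∀ u, M (1, u) = σ 0) ∧ (∀ s, M (s, 0) = σ 0) ∧ (∀ s, M (s, 1) = σ 0) := by
  obtain ⟨K, Kc, K0, K1, Kl⟩ := h
  simp only at K1
  have K00 : K (0, 0) = σ 0 := by rw [K0, cl_zero]
  have hclc : Continuous fun p : ℝ × ℝ => cl p.1 := continuous_cl.comp continuous_fst
  have hclu : Continuous fun p : ℝ × ℝ => cl p.2 := continuous_cl.comp continuous_snd
  refine ⟨fun p =>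
    if cl p.1 ≤ 1/3 then
      σ ((1 - cl (3 * cl p.1)) * cl p.2 + cl (3 * cl p.1) * cl (3 * cl p.2 - 1))
    else if cl p.1 ≤ 2/3 then
      (if cl p.2 ≤ 1/3 then K (cl (3 * cl p.2 * cl (3 * cl p.1 - 1)), 0)
       else if cl p.2 ≤ 2/3 then K (cl (3 * cl p.1 - 1), 3 * cl p.2 - 1)
       else K (cl (3 * (1 - cl p.2) * cl (3 * cl p.1 - 1)), 0))
    else
      K (cl ((1 - cl (3 * cl p.1 - 2)) *
        (if cl p.2 ≤ 1/3 then 3 * cl p.2 else if cl p.2 ≤ 2/3 then 1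
         else 3 * (1 - cl p.2))), 0), ?_, ?_, ?_, ?_, ?_⟩
  · -- continuity
    have hrR : Continuous fun p : ℝ × ℝ => cl (3 * cl p.1) :=
      continuous_cl.comp (continuous_const.mul hclc)
    have hrM : Continuous fun p : ℝ × ℝ => cl (3 * cl p.1 - 1) :=
      continuous_cl.comp ((continuous_const.mul hclc).sub continuous_const)
    have hrN : Continuous fun p : ℝ × ℝ => cl (3 * cl p.1 - 2) :=
      continuous_cl.comp ((continuous_const.mul hclc).sub continuous_const)
    have hqc : Continuous fun p : ℝ × ℝ =>
        (if cl p.2 ≤ 1/3 then 3 * cl p.2 else if cl p.2 ≤ 2/3 then 1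
         else 3 * (1 - cl p.2)) := by
      apply Continuous.if_le (continuous_const.mul hclu) _ hclu continuous_const
      · intro p hp; rw [if_pos (by rw [hp]; norm_num : cl p.2 ≤ 2/3)]; simp only [Pi.mul_apply, hp]; norm_num
      · apply Continuous.if_le continuous_const
          (continuous_const.mul (continuous_const.sub hclu)) hclu continuous_const
        intro p hp; simp only [Pi.mul_apply, Pi.sub_apply, hp]; norm_num
    apply Continuous.if_le
    · exact hσ.comp (((continuous_const.sub hrR).mul hclu).add
        (hrR.mul (continuous_cl.comp ((continuous_const.mul hclu).sub continuous_const))))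
    · apply Continuous.if_le
      · apply Continuous.if_le
        · exact Kc.comp ((continuous_cl.comp ((continuous_const.mul hclu).mul hrM)).prodMk
            continuous_const)
        · apply Continuous.if_le
          · exact Kc.comp (hrM.prodMk ((continuous_const.mul hclu).sub continuous_const))
          · exact Kc.comp ((continuous_cl.comp ((continuous_const.mul
              (continuous_const.sub hclu)).mul hrM)).prodMk continuous_const)
          · exact hclu
          · exact continuous_const
          · intro p hp
            rw [hp]
            have e1 : (3:ℝ) * (2/3) - 1 = 1 := by norm_num
            have e2 : (3:ℝ) * (1 - 2/3) * cl (3 * cl p.1 - 1) = cl (3 * cl p.1 - 1) := by ring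
            rw [e1, e2, cl_idem', Kl]
        · exact hclu
        · exact continuous_const
        · intro p hp
          rw [hp, if_pos (by norm_num : (1:ℝ)/3 ≤ 2/3)]
          have e1 : (3:ℝ) * (1/3) * cl (3 * cl p.1 - 1) = cl (3 * cl p.1 - 1) := by ring
          have e2 : (3:ℝ) * (1/3) - 1 = 0 := by norm_num
          rw [e1, e2, cl_idem']
      · exact Kc.comp ((continuous_cl.comp ((continuous_const.sub hrN).mul hqc)).prodMk
          continuous_const)
      · exact hclc
      · exact continuous_const
      · intro p hp
        rw [hp]
        have e1 : cl (3 * (2/3 : ℝ) - 1) = 1 := by rw [show (3:ℝ) * (2/3) - 1 = 1 by norm_num]; exact cl_one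
        have e2 : cl (3 * (2/3 : ℝ) - 2) = 0 := by
          rw [show (3:ℝ) * (2/3) - 2 = 0 by norm_num]; exact cl_zero
        rw [e1, e2, sub_zero, one_mul]
        split_ifs with h1 h2
        · rw [mul_one]
        · rw [cl_one, K1, K1]
        · rw [mul_one]
    · exact hclc
    · exact continuous_const
    · intro p hp
      rw [hp, if_pos (by norm_num : (1:ℝ)/3 ≤ 2/3)]
      have e1 : cl (3 * ((1:ℝ)/3)) = 1 := by
        rw [show (3:ℝ) * (1/3) = 1 by norm_num]; exact cl_one
      have e2 : cl (3 * ((1:ℝ)/3) - 1) = 0 := by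
        rw [show (3:ℝ) * (1/3) - 1 = 0 by norm_num]; exact cl_zero
      rw [e1, e2, sub_self, zero_mul, zero_add, one_mul]
      split_ifs with h1 h2
      · rw [mul_zero, cl_zero, K00, cl_of_nonpos (by linarith : 3 * cl p.2 - 1 ≤ 0)]
      · rw [K0]
      · push_neg at h2
        rw [mul_zero, cl_zero, K00, cl_of_ge_one (by linarith : (1:ℝ) ≤ 3 * cl p.2 - 1), ← h01]
  · intro u
    simp only [cl_zero]
    rw [if_pos (by norm_num : (0:ℝ) ≤ 1/3)]
    rw [show (3:ℝ) * 0 = 0 by ring, cl_zero, sub_zero, one_mul, zero_mul, add_zero]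
  · intro u
    simp only [cl_one]
    rw [if_neg (by norm_num : ¬ (1:ℝ) ≤ 1/3), if_neg (by norm_num : ¬ (1:ℝ) ≤ 2/3)]
    rw [show (3:ℝ) * 1 - 2 = 1 by ring, cl_one, sub_self, zero_mul, cl_zero, K00]
  · intro s
    have htr : (0:ℝ) ≤ 1/3 := by norm_num
    simp only [cl_zero, if_pos htr]
    split_ifs with h1 h2
    · rw [show (3:ℝ) * 0 - 1 = -1 by ring, cl_of_nonpos (by norm_num : (-1:ℝ) ≤ 0),
        mul_zero, mul_zero, add_zero]
    · rw [show (3:ℝ) * 0 * cl (3 * cl s - 1) = 0 by ring, cl_zero, K00]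
    · rw [show (3:ℝ) * 0 = 0 by ring, mul_zero, cl_zero, K00]
  · intro s
    have hf1 : ¬ ((1:ℝ) ≤ 1/3) := by norm_num
    have hf2 : ¬ ((1:ℝ) ≤ 2/3) := by norm_num
    simp only [cl_one, if_neg hf1, if_neg hf2]
    split_ifs with h1 h2
    · rw [show (3:ℝ) * 1 - 1 = 2 by ring, cl_of_ge_one (by norm_num : (1:ℝ) ≤ 2),
        show ((1:ℝ) - cl (3 * cl s)) * 1 + cl (3 * cl s) * 1 = 1 by ring, ← h01]
    · rw [show (3:ℝ) * (1 - 1) * cl (3 * cl s - 1) = 0 by ring, cl_zero, K00]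
    · rw [show (3:ℝ) * (1 - 1) = 0 by ring, mul_zero, cl_zero, K00]

lemma FH.trans {f g h : ℝ → X} (h1 : FH f g) (h2 : FH g h) : FH f h := by
  obtain ⟨K, Kc, K0, K1, Kl⟩ := h1
  obtain ⟨K', K'c, K'0, K'1, K'l⟩ := h2
  refine ⟨fun p => if p.1 ≤ 1/2 then K (cl (2 * p.1), p.2) else K' (cl (2 * p.1 - 1), p.2),
    ?_, ?_, ?_, ?_⟩
  · apply Continuous.if_le
    · exact Kc.comp ((continuous_cl.comp (continuous_const.mul continuous_fst)).prodMk
        continuous_snd)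
    · exact K'c.comp ((continuous_cl.comp ((continuous_const.mul continuous_fst).sub
        continuous_const)).prodMk continuous_snd)
    · exact continuous_fst
    · exact continuous_const
    · rintro ⟨s, t⟩ hs
      simp only at hs ⊢
      rw [hs]
      have e1 : cl (2 * (1/2 : ℝ)) = 1 := by norm_num
      have e2 : cl (2 * (1/2 : ℝ) - 1) = 0 := by norm_num [cl]
      rw [e1, e2, K1, K'0]
  · intro t; norm_num [K0]
  · intro t
    have : ¬ ((1:ℝ) ≤ 1/2) := by norm_num
    simp only [this, if_false]
    norm_num [K'1]
  · intro s
    dsimp only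
    split_ifs with h
    · exact Kl _
    · exact K'l _

/-- Near-right-endpoint variation estimate: on a small interval to the right of `p`,
the variation is at most `ε` plus the distance between endpoint values. -/
lemma evar_right_small (f : ℝ → X) {p q : ℝ} (hpq : p ≤ q)
    (hfin : eVariationOn f (Icc p q) ≠ ⊤) {ε : ℝ≥0∞} (hε : 0 < ε) :
    ∃ δ > 0, ∀ t, p ≤ t → t ≤ q → t - p < δ →
      eVariationOn f (Icc p t) ≤ ε + edist (f p) (f t) := by
  set ε' := min ε 1 with hε'
  have hε'pos : 0 < ε' := lt_min hε zero_lt_one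
  have hε'le : ε' ≤ ε := min_le_left _ _
  set W := eVariationOn f (Icc p q) with hW
  have triv : W ≤ ε → ∃ δ > 0, ∀ t, p ≤ t → t ≤ q → t - p < δ →
      eVariationOn f (Icc p t) ≤ ε + edist (f p) (f t) := by
    intro hWε
    exact ⟨1, zero_lt_one, fun t hpt htq _ =>
      le_add_right (le_trans (eVariationOn.mono f (Icc_subset_Icc le_rfl htq)) hWε)⟩
  by_cases hWsmall : W ≤ ε'
  · exact triv (hWsmall.trans hε'le)
  push_neg at hWsmall
  have hε'W : ε' ≤ W := hWsmall.le
  have hWne : W ≠ 0 := by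
    intro h
    rw [h] at hWsmall
    exact absurd hWsmall (not_lt.2 (zero_le))
  have hsub : W - ε' < W := ENNReal.sub_lt_self hfin hWne hε'pos.ne'
  rw [hW, eVariationOn] at hsub
  obtain ⟨⟨n, u, hu, us⟩, hS⟩ := lt_iSup_iff.mp hsub
  simp only at hS
  set S := ∑ i ∈ Finset.range n, edist (f (u (i + 1))) (f (u i)) with hSdef
  have hWS : W < S + ε' := by
    calc W = (W - ε') + ε' := (tsub_add_cancel_of_le hε'W).symm
    _ < S + ε' := by
        exact ENNReal.add_lt_add_right (ne_top_of_le_ne_top ENNReal.one_ne_top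
          (min_le_right ε 1)) hS
  set u' : ℕ → ℝ := fun i => if i = 0 then p else u (i - 1) with hu'def
  have hu'0 : u' 0 = p := rfl
  have hu'succ : ∀ i, u' (i + 1) = u i := fun i => by simp [hu'def]
  have hu' : Monotone u' := by
    apply monotone_nat_of_le_succ
    intro i
    cases i with
    | zero => rw [hu'0, hu'succ]; exact (us 0).1
    | succ j => rw [hu'succ, hu'succ]; exact hu (Nat.le_succ j)
  have us' : ∀ i, u' i ∈ Icc p q := by
    intro i
    cases i with
    | zero => rw [hu'0]; exact ⟨le_rfl, hpq⟩
    | succ j => rw [hu'succ]; exact us j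
  set S' := ∑ i ∈ Finset.range (n + 1), edist (f (u' (i + 1))) (f (u' i)) with hS'def
  have hSS' : S ≤ S' := by
    rw [hS'def, Finset.sum_range_succ']
    have : ∀ i, edist (f (u' (i + 1 + 1))) (f (u' (i + 1))) = edist (f (u (i + 1))) (f (u i)) := by
      intro i; rw [hu'succ, hu'succ]
    rw [Finset.sum_congr rfl (fun i _ => this i)]
    exact le_add_right le_rfl
  have hS'W : S' ≤ W := eVariationOn.sum_le (f := f) (n := n + 1) hu' us'
  have hWS' : W < S' + ε' := lt_of_lt_of_le hWS (add_le_add_left hSS' _)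
  by_cases hex : ∃ i, p < u' i
  case neg =>
    push_neg at hex
    have hallp : ∀ i, u' i = p := fun i => le_antisymm (hex i) (us' i).1
    have hS'0 : S' = 0 := by
      rw [hS'def]
      apply Finset.sum_eq_zero
      intro i _
      rw [hallp, hallp, edist_self]
    rw [hS'0, zero_add] at hWS'
    exact triv (le_trans hWS'.le hε'le)
  case pos =>
  classical
  set k := Nat.find hex with hk
  have hku : p < u' k := Nat.find_spec hex
  have hkmin : ∀ i, i < k → u' i = p := fun i hi =>
    le_antisymm (not_lt.1 (Nat.find_min hex hi)) (us' i).1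
  have hk0 : k ≠ 0 := by
    intro h
    rw [h, hu'0] at hku
    exact lt_irrefl _ hku
  refine ⟨u' k - p, sub_pos.2 hku, fun t hpt htq hlt => ?_⟩
  have htk : t < u' k := by linarith
  set w : ℕ → ℝ := fun i => max t (u' i) with hwdef
  have hwmono : Monotone w := fun i j hij => max_le_max le_rfl (hu' hij)
  have hwmem : ∀ i, w i ∈ Icc t q := fun i => ⟨le_max_left _ _, max_le htq (us' i).2⟩
  set T := ∑ i ∈ Finset.range (n + 1), edist (f (w (i + 1))) (f (w i)) with hTdef
  have hT : T ≤ eVariationOn f (Icc t q) := eVariationOn.sum_le (f := f) (n := n + 1) hwmono hwmem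
  have hpoint : ∀ i ∈ Finset.range (n + 1),
      edist (f (u' (i + 1))) (f (u' i)) ≤ edist (f (w (i + 1))) (f (w i)) +
        (if i + 1 = k then edist (f p) (f t) else 0) := by
    intro i _
    rcases lt_trichotomy (i + 1) k with hik | hik | hik
    · rw [hkmin _ hik, hkmin _ (lt_trans (Nat.lt_succ_self i) hik), edist_self]
      exact zero_le
    · rw [if_pos hik, hkmin _ (by omega : i < k)]
      have hw1 : w (i + 1) = u' (i + 1) := max_eq_right (by rw [hik]; exact htk.le)
      have hw0 : w i = t := max_eq_left (by rw [hkmin _ (by omega : i < k)]; exact hpt)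
      rw [hw1, hw0]
      calc edist (f (u' (i + 1))) (f p)
          ≤ edist (f (u' (i + 1))) (f t) + edist (f t) (f p) := edist_triangle _ _ _
        _ = edist (f (u' (i + 1))) (f t) + edist (f p) (f t) := by rw [edist_comm (f t)]
    · have hki : k ≤ i := Nat.lt_succ_iff.1 hik
      have hw0 : w i = u' i := max_eq_right (le_trans htk.le (hu' hki))
      have hw1 : w (i + 1) = u' (i + 1) := max_eq_right (le_trans htk.le (hu' (hki.trans (Nat.le_succ i))))
      rw [hw0, hw1, if_neg (Nat.lt_iff_le_and_ne.1 hik).2.symm, add_zero]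
  have hsum : S' ≤ T + edist (f p) (f t) := by
    calc S' ≤ ∑ i ∈ Finset.range (n + 1), (edist (f (w (i + 1))) (f (w i)) +
        (if i + 1 = k then edist (f p) (f t) else 0)) := Finset.sum_le_sum hpoint
      _ = T + ∑ i ∈ Finset.range (n + 1), (if i + 1 = k then edist (f p) (f t) else 0) := by
          rw [Finset.sum_add_distrib]
      _ ≤ T + edist (f p) (f t) := by
          apply add_le_add_right
          have : ∀ i, (if i + 1 = k then edist (f p) (f t) else 0) =
              (if i = k - 1 then edist (f p) (f t) else 0) := by
            intro i
            congr 1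
            simp only [eq_iff_iff]
            omega
          rw [Finset.sum_congr rfl (fun i _ => this i), Finset.sum_ite_eq']
          split_ifs
          · exact le_rfl
          · exact zero_le
  have hsplit : eVariationOn f (Icc p t) + eVariationOn f (Icc t q) = W := by
    have := eVariationOn.Icc_add_Icc f (s := univ) hpt htq (mem_univ t)
    simpa only [univ_inter] using this
  have hTne : T ≠ ⊤ :=
    ne_top_of_le_ne_top hfin (le_trans hT (eVariationOn.mono f (Icc_subset_Icc hpt le_rfl)))
  have hfinal : eVariationOn f (Icc p t) + T < (edist (f p) (f t) + ε') + T := by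
    calc eVariationOn f (Icc p t) + T
        ≤ eVariationOn f (Icc p t) + eVariationOn f (Icc t q) :=
          add_le_add_right hT _
      _ = W := hsplit
      _ < S' + ε' := hWS'
      _ ≤ (T + edist (f p) (f t)) + ε' := add_le_add_left hsum _
      _ = (edist (f p) (f t) + ε') + T := by ring
  have := (ENNReal.add_lt_add_iff_right hTne).1 hfinal
  calc eVariationOn f (Icc p t) ≤ edist (f p) (f t) + ε' := this.le
    _ ≤ edist (f p) (f t) + ε := add_le_add_right hε'le _
    _ = ε + edist (f p) (f t) := add_comm _ _


lemma evar_left_small (f : ℝ → X) {p q : ℝ} (hpq : p ≤ q)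
    (hfin : eVariationOn f (Icc p q) ≠ ⊤) {ε : ℝ≥0∞} (hε : 0 < ε) :
    ∃ δ > 0, ∀ t, p ≤ t → t ≤ q → q - t < δ →
      eVariationOn f (Icc t q) ≤ ε + edist (f t) (f q) := by
  have hanti : ∀ s : Set ℝ, AntitoneOn (Neg.neg : ℝ → ℝ) s := fun s a _ b _ h => neg_le_neg h
  have hcomp : ∀ x y : ℝ, x ≤ y →
      eVariationOn (f ∘ Neg.neg) (Icc (-y) (-x)) = eVariationOn f (Icc x y) := by
    intro x y _
    rw [eVariationOn.comp_eq_of_antitoneOn f Neg.neg (hanti _)]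
    congr 1
    ext z
    constructor
    · rintro ⟨w, hw, rfl⟩
      exact ⟨by linarith [hw.2], by linarith [hw.1]⟩
    · intro hz
      exact ⟨-z, ⟨by linarith [hz.2], by linarith [hz.1]⟩, neg_neg z⟩
  obtain ⟨δ, hδ, hright⟩ := evar_right_small (f ∘ Neg.neg) (neg_le_neg hpq)
    (by rw [hcomp p q hpq]; exact hfin) hε
  refine ⟨δ, hδ, fun t hpt htq hlt => ?_⟩
  have := hright (-t) (neg_le_neg htq) (neg_le_neg hpt) (by linarith)
  rw [hcomp t q htq] at this
  simpa only [Function.comp_apply, neg_neg, edist_comm] using this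

/-- The variation function of a continuous function of bounded variation is continuous. -/
lemma variation_continuousOn (f : ℝ → X) (hf : Continuous f)
    (hfin : eVariationOn f (Icc 0 1) ≠ ⊤) :
    ContinuousOn (variationOnFromTo f (Icc 0 1) 0) (Icc 0 1) := by
  have hBV : LocallyBoundedVariationOn f (Icc 0 1) :=
    BoundedVariationOn.locallyBoundedVariationOn hfin
  have h0mem : (0:ℝ) ∈ Icc (0:ℝ) 1 := ⟨le_rfl, zero_le_one⟩
  rw [Metric.continuousOn_iff]
  intro t0 ht0 ε hε
  have hq4 : (0:ℝ) < ε/4 := by linarith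
  have hof : (0:ℝ≥0∞) < ENNReal.ofReal (ε/4) := ENNReal.ofReal_pos.2 hq4
  obtain ⟨δR, hδRpos, hR⟩ := evar_right_small f (p := t0) (q := 1) ht0.2
    (ne_top_of_le_ne_top hfin (eVariationOn.mono f (Icc_subset_Icc ht0.1 le_rfl))) hof
  obtain ⟨δL, hδLpos, hL⟩ := evar_left_small f (p := 0) (q := t0) ht0.1
    (ne_top_of_le_ne_top hfin (eVariationOn.mono f (Icc_subset_Icc le_rfl ht0.2))) hof
  obtain ⟨δC, hδCpos, hC⟩ := Metric.continuous_iff.mp hf t0 (ε/4) hq4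
  refine ⟨min (min δR δL) δC, by positivity, fun t ht hdist => ?_⟩
  set v := variationOnFromTo f (Icc 0 1) 0 with hv
  have hmono : MonotoneOn v (Icc 0 1) := variationOnFromTo.monotoneOn hBV h0mem
  have key : ∀ a b : ℝ, a ∈ Icc (0:ℝ) 1 → b ∈ Icc (0:ℝ) 1 → a ≤ b →
      v b - v a = (eVariationOn f (Icc a b)).toReal := by
    intro a b ha hb hab
    have hadd := variationOnFromTo.add (f := f) hBV h0mem ha hb
    have heq : v b - v a = variationOnFromTo f (Icc 0 1) a b := by
      rw [hv]; linarith [hadd]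
    rw [heq, variationOnFromTo.eq_of_le f _ hab]
    congr 1
    rw [Icc_inter_Icc, max_eq_right ha.1, min_eq_right hb.2]
  have habs : |t - t0| < min (min δR δL) δC := by rwa [Real.dist_eq] at hdist
  have hdC : dist (f t) (f t0) < ε/4 := hC t (lt_of_lt_of_le hdist (min_le_right _ _))
  have hhalf : ∀ V : ℝ≥0∞, V ≤ ENNReal.ofReal (ε/4) + edist (f t0) (f t) → V.toReal ≤ ε/2 := by
    intro V hV
    have hed : edist (f t0) (f t) ≤ ENNReal.ofReal (ε/4) := by
      rw [edist_dist]
      exact ENNReal.ofReal_le_ofReal (by rw [dist_comm]; exact hdC.le)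
    have : V ≤ ENNReal.ofReal (ε/2) := by
      calc V ≤ ENNReal.ofReal (ε/4) + ENNReal.ofReal (ε/4) := le_trans hV (add_le_add_right hed _)
        _ = ENNReal.ofReal (ε/2) := by
            rw [← ENNReal.ofReal_add hq4.le hq4.le]; congr 1; ring
    exact ENNReal.toReal_le_of_le_ofReal (by linarith) this
  rcases le_total t0 t with hcase | hcase
  · have hvb := key t0 t ht0 ht hcase
    have hvar := hR t hcase ht.2
      (lt_of_le_of_lt (le_abs_self _) (lt_of_lt_of_le habs ((min_le_left _ _).trans (min_le_left _ _))))
    have hle : v t - v t0 ≤ ε/2 := by rw [hvb]; exact hhalf _ hvar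
    have hnn : 0 ≤ v t - v t0 := sub_nonneg.2 (hmono ht0 ht hcase)
    rw [Real.dist_eq, abs_of_nonneg hnn]
    linarith
  · have hvb := key t t0 ht ht0 hcase
    have hlt : t0 - t < δL := by
      have h1 : t0 - t ≤ |t - t0| := by rw [abs_sub_comm]; exact le_abs_self _
      have h2 : |t - t0| < δL := lt_of_lt_of_le habs ((min_le_left _ _).trans (min_le_right _ _))
      linarith
    have hvar := hL t ht.1 hcase hlt
    have hle : v t0 - v t ≤ ε/2 := by
      rw [hvb]
      apply hhalf _
      rwa [edist_comm] at hvar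
    have hnn : 0 ≤ v t0 - v t := sub_nonneg.2 (hmono ht ht0 hcase)
    rw [Real.dist_eq, abs_sub_comm, abs_of_nonneg hnn]
    linarith


/-- Straight-segment (in parameter space) free homotopy between two reparametrized loops. -/
lemma FH.segment {Φ : ℝ → X} (hΦ : Continuous Φ) {A B : ℝ → ℝ}
    (hA : Continuous A) (hB : Continuous B) {f g : ℝ → X}
    (hf : ∀ t, f (cl t) = Φ (A (cl t))) (hg : ∀ t, g (cl t) = Φ (B (cl t)))
    (hends : ∀ s, s ∈ Icc (0:ℝ) 1 →
      Φ ((1 - s) * A 0 + s * B 0) = Φ ((1 - s) * A 1 + s * B 1)) :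
    FH f g := by
  refine ⟨fun p => Φ ((1 - cl p.1) * A (cl p.2) + cl p.1 * B (cl p.2)), ?_, ?_, ?_, ?_⟩
  · have hclc : Continuous fun p : ℝ × ℝ => cl p.1 := continuous_cl.comp continuous_fst
    have hclu : Continuous fun p : ℝ × ℝ => cl p.2 := continuous_cl.comp continuous_snd
    exact hΦ.comp (((continuous_const.sub hclc).mul (hA.comp hclu)).add
      (hclc.mul (hB.comp hclu)))
  · intro t
    rw [hf t]
    simp [cl_zero]
  · intro t
    rw [hg t]
    simp [cl_one]
  · intro s
    simp only [cl_zero, cl_one]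
    exact hends (cl s) (cl_mem s)

end SNCC

open SNCC

/-- A closed curve `γ` (on `[0,1]`) in `X` which is not contractible. -/
def NCLoop {X : Type*} [TopologicalSpace X] (γ : ℝ → X) : Prop :=
  Continuous γ ∧ γ 0 = γ 1 ∧
  ¬ ∃ H : ℝ × ℝ → X, Continuous H ∧ (∀ t, H (0, t) = γ t) ∧
      (∀ t, H (1, t) = H (1, 0)) ∧ (∀ s, H (s, 0) = H (s, 1))

/-- A shortest closed non-contractible rectifiable curve in a compact annulus
with an intrinsic metric is a simple closed curve: its image is homeomorphic to
a circle. -/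
theorem shortest_noncontractible_curve_is_simple
    (X : Type*) [MetricSpace X]
    (hhomeo : Nonempty (X ≃ₜ {z : ℂ | 1 ≤ ‖z‖ ∧ ‖z‖ ≤ 2}))
    (hintrinsic : ∀ x y : X, edist x y =
      ⨅ (γ : ℝ → X) (_ : Continuous γ) (_ : γ 0 = x) (_ : γ 1 = y),
        eVariationOn γ (Set.Icc 0 1))
    (γ : ℝ → X) (hγ : NCLoop γ)
    (hrect : eVariationOn γ (Set.Icc 0 1) < ⊤)
    (hmin : ∀ σ : ℝ → X, NCLoop σ →
      eVariationOn γ (Set.Icc 0 1) ≤ eVariationOn σ (Set.Icc 0 1)) :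
    Nonempty ((γ '' Set.Icc 0 1) ≃ₜ Circle) := by
  classical
  obtain ⟨γc, γ01, hncontr⟩ := hγ
  have hfin : eVariationOn γ (Icc 0 1) ≠ ⊤ := hrect.ne
  have hBV : LocallyBoundedVariationOn γ (Icc 0 1) :=
    BoundedVariationOn.locallyBoundedVariationOn hfin
  have h0mem : (0:ℝ) ∈ Icc (0:ℝ) 1 := ⟨le_rfl, zero_le_one⟩
  have h1mem : (1:ℝ) ∈ Icc (0:ℝ) 1 := ⟨zero_le_one, le_rfl⟩
  set v : ℝ → ℝ := variationOnFromTo γ (Icc 0 1) 0 with hvdef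
  set L : ℝ := v 1 with hLdef
  set g : ℝ → X := naturalParameterization γ (Icc 0 1) 0 with hgdef
  have hv0 : v 0 = 0 := variationOnFromTo.self _ _ _
  have hvmono : MonotoneOn v (Icc 0 1) := variationOnFromTo.monotoneOn hBV h0mem
  have hvmem : ∀ t ∈ Icc (0:ℝ) 1, v t ∈ Icc 0 L := fun t ht =>
    ⟨hv0 ▸ hvmono h0mem ht ht.1, hvmono ht h1mem ht.2⟩
  have hL0 : 0 ≤ L := variationOnFromTo.nonneg_of_le γ _ zero_le_one
  have hvcont : ContinuousOn v (Icc 0 1) := SNCC.variation_continuousOn γ γc hfin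
  have himg : v '' Icc 0 1 = Icc 0 L := by
    apply Subset.antisymm
    · rintro _ ⟨t, ht, rfl⟩
      exact hvmem t ht
    · have h := intermediate_value_Icc (zero_le_one) hvcont
      rw [hv0] at h
      exact h
  have hγg : ∀ t ∈ Icc (0:ℝ) 1, g (v t) = γ t := fun t ht =>
    edist_eq_zero.1 (edist_naturalParameterization_eq_zero hBV h0mem ht)
  have hunit : HasUnitSpeedOn g (Icc 0 L) := by
    rw [← himg]
    exact has_unit_speed_naturalParameterization γ hBV h0mem
  have hvar : ∀ x y : ℝ, 0 ≤ x → x ≤ y → y ≤ L →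
      eVariationOn g (Icc x y) = ENNReal.ofReal (y - x) := by
    intro x y hx hxy hyL
    have h := hunit (⟨hx, hxy.trans hyL⟩ : x ∈ Icc 0 L) (⟨hx.trans hxy, hyL⟩ : y ∈ Icc 0 L)
    rw [Icc_inter_Icc, max_eq_right hx, min_eq_right hyL] at h
    rw [h, NNReal.coe_one, one_mul]
  have hlip : LipschitzOnWith 1 g (Icc 0 L) := by
    intro x hx y hy
    rcases le_total x y with hxy | hxy
    · calc edist (g x) (g y) ≤ eVariationOn g (Icc x y) :=
            eVariationOn.edist_le g ⟨le_rfl, hxy⟩ ⟨hxy, le_rfl⟩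
        _ = ENNReal.ofReal (y - x) := hvar x y hx.1 hxy hy.2
        _ ≤ ↑(1:NNReal) * edist x y := by
            rw [ENNReal.coe_one, one_mul, edist_dist, Real.dist_eq, abs_sub_comm,
              abs_of_nonneg (by linarith)]
    · calc edist (g x) (g y) = edist (g y) (g x) := edist_comm _ _
        _ ≤ eVariationOn g (Icc y x) := eVariationOn.edist_le g ⟨le_rfl, hxy⟩ ⟨hxy, le_rfl⟩
        _ = ENNReal.ofReal (x - y) := hvar y x hy.1 hxy hx.2
        _ ≤ ↑(1:NNReal) * edist x y := by
            rw [ENNReal.coe_one, one_mul, edist_dist, Real.dist_eq,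
              abs_of_nonneg (by linarith)]
  set G : ℝ → X := fun x => g (min L (max 0 x)) with hGdef
  have hGmem : ∀ x : ℝ, min L (max 0 x) ∈ Icc 0 L := fun x =>
    ⟨le_min hL0 (le_max_left 0 x), min_le_left _ _⟩
  have hGcont : Continuous G := by
    apply hlip.continuousOn.comp_continuous
      (continuous_const.min (continuous_const.max continuous_id)) hGmem
  have hGeq : ∀ x : ℝ, 0 ≤ x → x ≤ L → G x = g x := by
    intro x h1 h2
    rw [hGdef]
    simp only [max_eq_right h1, min_eq_right h2]
  have hg0L : g 0 = g L := by
    have e0 := hγg 0 h0mem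
    have e1 := hγg 1 h1mem
    rw [hv0] at e0
    rw [hLdef, e1, e0]
    exact γ01
  have hLen : eVariationOn γ (Icc 0 1) = ENNReal.ofReal L := by
    have h := variationOnFromTo.eq_of_le γ (Icc 0 1) (zero_le_one (α := ℝ))
    rw [inter_self] at h
    rw [hLdef, hvdef]
    rw [h, ENNReal.ofReal_toReal hfin]
  have hnotFH : ∀ c : X, ¬ SNCC.FH γ (fun _ => c) := fun c hFH =>
    hncontr (SNCC.FH.to_contr γc γ01 hFH)
  have hLpos : 0 < L := by
    rcases lt_or_eq_of_le hL0 with h | h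
    · exact h
    · exfalso
      have hvar0 : eVariationOn γ (Icc 0 1) = 0 := by
        rw [hLen, ← h, ENNReal.ofReal_zero]
      have hconst : ∀ t ∈ Icc (0:ℝ) 1, γ t = γ 0 := fun t ht =>
        edist_eq_zero.1 ((eVariationOn.eq_zero_iff γ).1 hvar0 t ht 0 h0mem)
      apply hnotFH (γ (1/2))
      apply SNCC.FH.segment γc continuous_id continuous_const (f := γ) (g := fun _ => γ (1/2))
        (A := id) (B := fun _ => 1/2) (fun t => rfl) (fun t => rfl)
      intro s hs
      have m1 : (1 - s) * (id 0 : ℝ) + s * (1/2) ∈ Icc (0:ℝ) 1 := by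
        simp only [id_eq]
        constructor <;> nlinarith [hs.1, hs.2]
      have m2 : (1 - s) * (id 1 : ℝ) + s * (1/2) ∈ Icc (0:ℝ) 1 := by
        simp only [id_eq]
        constructor <;> nlinarith [hs.1, hs.2]
      rw [hconst _ m1, hconst _ m2]
  have hlin : ∀ (c d x y : ℝ), 0 < c → x ≤ y →
      (fun t : ℝ => c * t + d) '' Icc x y = Icc (c*x+d) (c*y+d) := by
    intro c d x y hc hxy
    ext z
    constructor
    · rintro ⟨t, ht, rfl⟩
      dsimp only
      exact ⟨by nlinarith [mul_nonneg (sub_nonneg.2 ht.1) hc.le],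
        by nlinarith [mul_nonneg (sub_nonneg.2 ht.2) hc.le]⟩
    · intro hz
      refine ⟨(z - d)/c, ⟨?_, ?_⟩, ?_⟩
      · rw [le_div_iff₀ hc]; linarith [hz.1, mul_comm x c]
      · rw [div_le_iff₀ hc]; linarith [hz.2, mul_comm y c]
      · field_simp; ring
  have hinj : ∀ a b : ℝ, 0 ≤ a → a < b → b ≤ L → g a = g b → a = 0 ∧ b = L := by
    intro a b ha hab hbL hgab
    by_contra hcon
    have haL : a < L := lt_of_lt_of_le hab hbL
    have hbaL : b - a < L := by
      rcases not_and_or.1 hcon with h | h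
      · have : 0 < a := lt_of_le_of_ne ha (Ne.symm h)
        linarith
      · have : b < L := lt_of_le_of_ne hbL h
        linarith
    set cδ : ℝ := L - (b - a) with hcδdef
    have hcpos : 0 < cδ := by rw [hcδdef]; linarith
    have hacδ : a ≤ cδ := by rw [hcδdef]; linarith
    have hGab : G a = G b := by
      rw [hGeq a ha (le_of_lt haL), hGeq b (le_trans ha hab.le) hbL, hgab]
    have hG0L : G 0 = G L := by
      rw [hGeq 0 le_rfl hL0, hGeq L hL0 le_rfl, hg0L]
    set σ1 : ℝ → X := fun t => G (a + (b - a) * cl t) with hσ1def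
    set σ2 : ℝ → X := fun t =>
      if cδ * cl t ≤ a then G (cδ * cl t) else G (cδ * cl t + (b - a)) with hσ2def
    have hσ1c : Continuous σ1 :=
      hGcont.comp (continuous_const.add (continuous_const.mul continuous_cl))
    have hσ2c : Continuous σ2 := by
      apply Continuous.if_le (hGcont.comp (continuous_const.mul continuous_cl))
        (hGcont.comp ((continuous_const.mul continuous_cl).add continuous_const))
        (continuous_const.mul continuous_cl) continuous_const
      intro t ht
      simp only [Function.comp_apply, Pi.mul_apply, Pi.add_apply] at ht ⊢
      rw [ht, show a + (b - a) = b by ring, hGab]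
    have hσ1fac : ∀ t, σ1 (cl t) = σ1 t := fun t => by rw [hσ1def]; simp [cl_idem']
    have hσ2fac : ∀ t, σ2 (cl t) = σ2 t := fun t => by rw [hσ2def]; simp [cl_idem']
    have hσ10 : σ1 0 = G a := by rw [hσ1def]; simp [cl_zero]
    have hσ1loop : σ1 0 = σ1 1 := by
      rw [hσ1def]; simp only [cl_zero, cl_one, mul_zero, mul_one, add_zero]
      rw [show a + (b - a) = b by ring, hGab]
    have hσ20 : σ2 0 = G 0 := by
      rw [hσ2def]; simp only [cl_zero, mul_zero]
      rw [if_pos ha]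
    have hσ21 : σ2 1 = G 0 := by
      rw [hσ2def]; simp only [cl_one, mul_one]
      by_cases hc : cδ ≤ a
      · have hca : cδ = a := le_antisymm hc hacδ
        have hbL' : b = L := by rw [hcδdef] at hca; linarith
        rw [if_pos hc, hca, hGab, hbL', hG0L]
      · rw [if_neg hc, show cδ + (b - a) = L from by rw [hcδdef]; ring, hG0L]
    have hσ2loop : σ2 0 = σ2 1 := by rw [hσ20, hσ21]
    -- variation computations
    have varσ1 : eVariationOn σ1 (Icc 0 1) = ENNReal.ofReal (b - a) := by
      have heq : EqOn σ1 (g ∘ fun t => (b - a) * t + a) (Icc 0 1) := by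
        intro t ht
        rw [hσ1def]
        simp only [Function.comp_apply]
        rw [cl_of_mem ht, hGeq _ (by nlinarith [ht.1, ht.2]) (by nlinarith [ht.1, ht.2])]
        congr 1
        ring
      rw [eVariationOn.eq_of_eqOn heq,
        eVariationOn.comp_eq_of_monotoneOn g _ (fun x _ y _ hxy => by nlinarith),
        hlin (b - a) a 0 1 (by linarith) zero_le_one]
      rw [mul_zero, zero_add, mul_one]
      rw [show b - a + a = b by ring]
      exact hvar a b ha hab.le hbL
    set m : ℝ := a / cδ with hmdef
    have hm0 : 0 ≤ m := div_nonneg ha hcpos.le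
    have hm1 : m ≤ 1 := (div_le_one hcpos).2 hacδ
    have hcm : cδ * m = a := by rw [hmdef]; field_simp
    have varσ2 : eVariationOn σ2 (Icc 0 1) = ENNReal.ofReal cδ := by
      have hsplitv := eVariationOn.Icc_add_Icc σ2 (s := univ) hm0 hm1 (mem_univ m)
      simp only [univ_inter] at hsplitv
      have hp1 : eVariationOn σ2 (Icc 0 m) = ENNReal.ofReal a := by
        have heq : EqOn σ2 (g ∘ fun t => cδ * t + 0) (Icc 0 m) := by
          intro t ht
          have htI : t ∈ Icc (0:ℝ) 1 := ⟨ht.1, ht.2.trans hm1⟩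
          rw [hσ2def]
          simp only [Function.comp_apply]
          rw [cl_of_mem htI]
          have hta : cδ * t ≤ a := by
            rw [← hcm]; exact mul_le_mul_of_nonneg_left ht.2 hcpos.le
          rw [if_pos hta, hGeq _ (mul_nonneg hcpos.le ht.1) (by linarith), add_zero]
        rw [eVariationOn.eq_of_eqOn heq,
          eVariationOn.comp_eq_of_monotoneOn g _ (fun x _ y _ hxy => by nlinarith),
          hlin cδ 0 0 m hcpos hm0]
        rw [mul_zero, zero_add, add_zero, hcm]
        have h := hvar 0 a le_rfl ha (by linarith)
        rw [sub_zero] at h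
        exact h
      have hp2 : eVariationOn σ2 (Icc m 1) = ENNReal.ofReal (L - b) := by
        have heq : EqOn σ2 (g ∘ fun t => cδ * t + (b - a)) (Icc m 1) := by
          intro t ht
          have htI : t ∈ Icc (0:ℝ) 1 := ⟨le_trans hm0 ht.1, ht.2⟩
          rw [hσ2def]
          simp only [Function.comp_apply]
          rw [cl_of_mem htI]
          rcases eq_or_lt_of_le ht.1 with heqm | hltm
          · rw [← heqm, hcm, if_pos le_rfl]
            rw [show a + (b - a) = b by ring]
            rw [hGeq a ha (by linarith)]
            exact hgab
          · have hta : ¬ cδ * t ≤ a := by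
              rw [← hcm]
              push_neg
              exact (mul_lt_mul_iff_right₀ hcpos).2 hltm
            rw [if_neg hta]
            rw [hGeq _ (by nlinarith [le_trans hm0 hltm.le, ha, hab]) (by nlinarith [ht.2])]
        rw [eVariationOn.eq_of_eqOn heq,
          eVariationOn.comp_eq_of_monotoneOn g _ (fun x _ y _ hxy => by nlinarith),
          hlin cδ (b - a) m 1 hcpos hm1]
        rw [hcm, mul_one]
        rw [show a + (b - a) = b by ring, show cδ + (b - a) = L from by rw [hcδdef]; ring]
        exact hvar b L (by linarith) hbL le_rfl
      rw [← hsplitv, hp1, hp2, ← ENNReal.ofReal_add ha (by linarith)]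
      congr 1
      rw [hcδdef]
      ring
    -- the two sub-loops cannot both be essential (they are too short), and
    -- cannot both be nullhomotopic (else γ would be contractible)
    have hno1 : ¬ NCLoop σ1 := by
      intro hnc
      have h := hmin σ1 hnc
      rw [hLen, varσ1] at h
      have := (ENNReal.ofReal_le_ofReal_iff (by linarith)).1 h
      linarith
    have hno2 : ¬ NCLoop σ2 := by
      intro hnc
      have h := hmin σ2 hnc
      rw [hLen, varσ2] at h
      have := (ENNReal.ofReal_le_ofReal_iff (by linarith)).1 h
      rw [hcδdef] at this
      linarith
    have hH1 : ∃ H : ℝ × ℝ → X, Continuous H ∧ (∀ t, H (0, t) = σ1 t) ∧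
        (∀ t, H (1, t) = H (1, 0)) ∧ (∀ s, H (s, 0) = H (s, 1)) := by
      by_contra hno
      exact hno1 ⟨hσ1c, hσ1loop, hno⟩
    have hH2 : ∃ H : ℝ × ℝ → X, Continuous H ∧ (∀ t, H (0, t) = σ2 t) ∧
        (∀ t, H (1, t) = H (1, 0)) ∧ (∀ s, H (s, 0) = H (s, 1)) := by
      by_contra hno
      exact hno2 ⟨hσ2c, hσ2loop, hno⟩
    obtain ⟨H1, H1c, H10, H11, H1l⟩ := hH1
    obtain ⟨H2, H2c, H20, H21, H2l⟩ := hH2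
    have hFH1 : SNCC.FH σ1 (fun _ => H1 (1, 0)) :=
      ⟨H1, H1c, fun t => by rw [H10 t, hσ1fac t], fun t => H11 t, H1l⟩
    have hFH2 : SNCC.FH σ2 (fun _ => H2 (1, 0)) :=
      ⟨H2, H2c, fun t => by rw [H20 t, hσ2fac t], fun t => H21 t, H2l⟩
    obtain ⟨M, Mc, M0, M1, Ms0, Ms1⟩ := SNCC.FH.based_null hσ1c hσ1loop hFH1
    rw [hσ10] at M1 Ms0 Ms1
    set Γ : ℝ → X := fun t => G (L * cl t) with hΓdef
    set Δ : ℝ → X := fun t =>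
      if L * cl t ≤ a then G (L * cl t) else if L * cl t ≤ b then G a
      else G (L * cl t) with hΔdef
    have hFHγΓ : SNCC.FH γ Γ := by
      apply SNCC.FH.segment hGcont (A := fun t => v (cl t)) (B := fun t => L * cl t)
        (hvcont.comp_continuous continuous_cl cl_mem)
        (continuous_const.mul continuous_cl)
      case hf =>
        intro t
        rw [cl_idem']
        rw [hGeq _ (hvmem _ (cl_mem t)).1 (hvmem _ (cl_mem t)).2, hγg _ (cl_mem t)]
      case hg =>
        intro t
        rw [hΓdef]
      case hends =>
        intro s hs
        simp only [cl_zero, cl_one, hv0, mul_zero, mul_one, add_zero, zero_add, ← hLdef]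
        rw [show (1 - s) * L + s * L = L by ring, hG0L]
    have hFHΓΔ : SNCC.FH Γ Δ := by
      refine ⟨fun p =>
        if L * cl p.2 ≤ a then G (L * cl p.2)
        else if L * cl p.2 ≤ b then M (cl p.1, (L * cl p.2 - a)/(b - a))
        else G (L * cl p.2), ?_, ?_, ?_, ?_⟩
      · have hclc : Continuous fun p : ℝ × ℝ => cl p.1 := continuous_cl.comp continuous_fst
        have hclu : Continuous fun p : ℝ × ℝ => L * cl p.2 :=
          continuous_const.mul (continuous_cl.comp continuous_snd)
        apply Continuous.if_le (hGcont.comp hclu) _ hclu continuous_const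
        · intro p hp
          simp only [Function.comp_apply]
          rw [hp, if_pos hab.le, show (a - a)/(b - a) = 0 by rw [sub_self, zero_div], Ms0]
        · apply Continuous.if_le
            (Mc.comp (hclc.prodMk ((hclu.sub continuous_const).div_const _)))
            (hGcont.comp hclu) hclu continuous_const
          intro p hp
          simp only [Function.comp_apply, Pi.sub_apply]
          rw [hp, show (b - a)/(b - a) = 1 from div_self (by linarith), Ms1, hGab]
      · intro t
        rw [hΓdef]
        simp only [cl_idem']
        split_ifs with h1 h2
        · rfl
        · push_neg at h1
          have hr : (L * cl t - a)/(b - a) ∈ Icc (0:ℝ) 1 :=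
            ⟨div_nonneg (by linarith) (by linarith), (div_le_one (by linarith)).2 (by linarith)⟩
          rw [cl_zero, M0, cl_of_mem hr, hσ1def]
          simp only
          rw [cl_of_mem hr]
          congr 1
          rw [mul_comm ((b:ℝ) - a), div_mul_cancel₀ _ (show (b:ℝ) - a ≠ 0 by linarith)]
          ring
        · rfl
      · intro t
        rw [hΔdef]
        simp only [cl_idem', cl_one]
        split_ifs with h1 h2
        · rfl
        · exact M1 _
        · rfl
      · intro s
        simp only [cl_zero, cl_one, mul_zero, mul_one]
        rw [if_pos ha]
        have hnLa : ¬ L ≤ a := by linarith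
        rw [if_neg hnLa]
        by_cases hLb : L ≤ b
        · have hbL' : b = L := le_antisymm hbL hLb
          rw [if_pos hLb, show (L - a)/(b - a) = 1 from by rw [hbL']; exact div_self (by linarith),
            Ms1, hGab, hbL']
          exact hG0L
        · rw [if_neg hLb, hG0L]
    set W : ℝ → ℝ := fun t =>
      (if L * cl t ≤ a then L * cl t else if L * cl t ≤ b then a
       else L * cl t - (b - a)) / cδ with hWdef
    have hWcont : Continuous W := by
      apply Continuous.div_const
      have hclu : Continuous fun t : ℝ => L * cl t := continuous_const.mul continuous_cl
      apply Continuous.if_le hclu _ hclu continuous_const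
      · intro t ht
        rw [ht, if_pos hab.le]
      · apply Continuous.if_le continuous_const (hclu.sub continuous_const) hclu
          continuous_const
        intro t ht
        simp only [Pi.sub_apply]; rw [ht]
        ring
    have hWfac : ∀ t, W (cl t) = W t := fun t => by rw [hWdef]; simp [cl_idem']
    have hW0 : W 0 = 0 := by
      rw [hWdef]
      simp only [cl_zero, mul_zero]
      rw [if_pos ha, zero_div]
    have hW1 : W 1 = 1 := by
      rw [hWdef]
      simp only [cl_one, mul_one]
      rw [if_neg (by linarith : ¬ L ≤ a)]
      by_cases hLb : L ≤ b
      · have hbL' : b = L := le_antisymm hbL hLb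
        have hca : cδ = a := by rw [hcδdef, hbL']; ring
        rw [if_pos hLb, hca]
        exact div_self (by rw [← hca]; linarith)
      · rw [if_neg hLb]
        rw [show L - (b - a) = cδ from by rw [hcδdef]]
        exact div_self (by linarith)
    have hcne : cδ ≠ 0 := by linarith
    have hDeq : ∀ t, Δ t = σ2 (W t) := by
      intro t
      have hx0 : 0 ≤ L * cl t := mul_nonneg hL0 (cl_nonneg t)
      have hxL : L * cl t ≤ L := by nlinarith [cl_le_one t, cl_nonneg t]
      by_cases h1 : L * cl t ≤ a
      · have hmem : L * cl t / cδ ∈ Icc (0:ℝ) 1 :=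
          ⟨div_nonneg hx0 hcpos.le, (div_le_one hcpos).2 (by linarith)⟩
        have hW : W t = L * cl t / cδ := by
          rw [hWdef]; simp only; rw [if_pos h1]
        have hval : cδ * (L * cl t / cδ) = L * cl t := by
          rw [mul_comm, div_mul_cancel₀ _ hcne]
        rw [hΔdef]
        simp only
        rw [if_pos h1, hW, hσ2def]
        simp only
        rw [cl_of_mem hmem, hval, if_pos h1]
      · by_cases h2 : L * cl t ≤ b
        · have hmem : a / cδ ∈ Icc (0:ℝ) 1 :=
            ⟨div_nonneg ha hcpos.le, (div_le_one hcpos).2 hacδ⟩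
          have hW : W t = a / cδ := by
            rw [hWdef]; simp only; rw [if_neg h1, if_pos h2]
          have hval : cδ * (a / cδ) = a := by
            rw [mul_comm, div_mul_cancel₀ _ hcne]
          rw [hΔdef]
          simp only
          rw [if_neg h1, if_pos h2, hW, hσ2def]
          simp only
          rw [cl_of_mem hmem, hval, if_pos le_rfl]
        · push_neg at h1 h2
          have hmem : (L * cl t - (b - a)) / cδ ∈ Icc (0:ℝ) 1 :=
            ⟨div_nonneg (by linarith) hcpos.le, (div_le_one hcpos).2 (by rw [hcδdef]; linarith)⟩
          have hW : W t = (L * cl t - (b - a)) / cδ := by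
            rw [hWdef]; simp only; rw [if_neg (by linarith : ¬ L * cl t ≤ a),
              if_neg (by linarith : ¬ L * cl t ≤ b)]
          have hval : cδ * ((L * cl t - (b - a)) / cδ) = L * cl t - (b - a) := by
            rw [mul_comm, div_mul_cancel₀ _ hcne]
          rw [hΔdef]
          simp only
          rw [if_neg (by linarith : ¬ L * cl t ≤ a), if_neg (by linarith : ¬ L * cl t ≤ b),
            hW, hσ2def]
          simp only
          rw [cl_of_mem hmem, hval, if_neg (by push_neg; linarith), sub_add_cancel]
    have hFHΔσ2 : SNCC.FH Δ σ2 := by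
      apply SNCC.FH.segment hσ2c (A := W) (B := cl) hWcont continuous_cl
      case hf =>
        intro t
        rw [hWfac, hΔdef]
        simp only [cl_idem']
        rw [← hDeq t, hΔdef]
      case hg =>
        intro t
        rw [cl_idem']
      case hends =>
        intro s hs
        rw [hW0, hW1, cl_zero, cl_one]
        rw [show (1 - s) * (0:ℝ) + s * 0 = 0 by ring, show (1 - s) * (1:ℝ) + s * 1 = 1 by ring]
        exact hσ2loop
    exact hnotFH _ (((hFHγΓ.trans hFHΓΔ).trans hFHΔσ2).trans hFH2)
  -- final assembly: the arc-length loop is injective on `[0, L)`, giving the circle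
  haveI : Fact (0 < L) := ⟨hLpos⟩
  have hG0L : G 0 = G L := by
    rw [hGeq 0 le_rfl hL0, hGeq L hL0 le_rfl]
    exact hg0L
  set F : AddCircle L → X := AddCircle.liftIco L 0 G with hFdef
  have hFcont : Continuous F :=
    AddCircle.liftIco_zero_continuous hG0L hGcont.continuousOn
  have hrep : ∀ q : AddCircle L, ∃ x : ℝ, 0 ≤ x ∧ x < L ∧ ((x : AddCircle L) = q) ∧
      F q = G x := by
    intro q
    refine ⟨(AddCircle.equivIco L 0 q : ℝ), ?_, ?_, ?_, rfl⟩
    · exact (AddCircle.equivIco L 0 q).2.1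
    · have h := (AddCircle.equivIco L 0 q).2.2
      have h0 : (0:ℝ) + L = L := zero_add L
      linarith [h]
    · exact (AddCircle.equivIco L 0).symm_apply_apply q
  have himgset : γ '' Icc 0 1 = G '' Icc 0 L := by
    rw [← himg, ← image_comp]
    apply image_congr
    intro t ht
    simp only [Function.comp_apply]
    rw [hGeq _ (hvmem t ht).1 (hvmem t ht).2, hγg t ht]
  have hmemF : ∀ q : AddCircle L, F q ∈ γ '' Icc 0 1 := by
    intro q
    obtain ⟨x, hx0, hxL, -, hFx⟩ := hrep q
    rw [himgset, hFx]
    exact mem_image_of_mem G ⟨hx0, hxL.le⟩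
  have hFinj : Function.Injective F := by
    intro q1 q2 heq
    obtain ⟨x1, hx10, hx1L, hq1, hF1⟩ := hrep q1
    obtain ⟨x2, hx20, hx2L, hq2, hF2⟩ := hrep q2
    rw [hF1, hF2] at heq
    have hg12 : g x1 = g x2 := by
      rw [← hGeq _ hx10 hx1L.le, ← hGeq _ hx20 hx2L.le]
      exact heq
    have hx12 : x1 = x2 := by
      rcases lt_trichotomy x1 x2 with h | h | h
      · rcases hinj x1 x2 hx10 h hx2L.le hg12 with ⟨-, h2⟩
        exact absurd h2 (ne_of_lt hx2L)
      · exact h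
      · rcases hinj x2 x1 hx20 h hx1L.le hg12.symm with ⟨-, h2⟩
        exact absurd h2 (ne_of_lt hx1L)
    rw [← hq1, ← hq2, hx12]
  have hFsurj : ∀ y : ↥(γ '' Icc 0 1), ∃ q : AddCircle L, F q = (y : X) := by
    rintro ⟨y, hy⟩
    rw [himgset] at hy
    obtain ⟨x, hx, rfl⟩ := hy
    rcases eq_or_lt_of_le hx.2 with hxL | hxL
    · refine ⟨((0:ℝ) : AddCircle L), ?_⟩
      have h := AddCircle.liftIco_zero_coe_apply (f := G) (⟨le_rfl, hLpos⟩ : (0:ℝ) ∈ Ico 0 L)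
      rw [hFdef]
      simp only
      rw [h, hG0L, ← hxL]
    · exact ⟨((x:ℝ) : AddCircle L),
        AddCircle.liftIco_zero_coe_apply (⟨hx.1, hxL⟩ : x ∈ Ico 0 L)⟩
  let e : AddCircle L ≃ ↥(γ '' Icc 0 1) :=
    { toFun := fun q => ⟨F q, hmemF q⟩
      invFun := fun y => Classical.choose (hFsurj y)
      left_inv := fun q => hFinj (Classical.choose_spec (hFsurj ⟨F q, hmemF q⟩))
      right_inv := fun y => Subtype.ext (Classical.choose_spec (hFsurj y)) }
  have hecont : Continuous e := Continuous.subtype_mk hFcont _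
  exact ⟨(Continuous.homeoOfEquivCompactToT2 (f := e) hecont).symm.trans
    (AddCircle.homeomorphCircle hLpos.ne')⟩
end
end
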